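/- Let r > 0, fix signs ε, ε_B ∈ {−1, 1}, and let μ, κ : ℝ → ℝ be functions satisfying the Lorentzian regularity condition 1 + ε_B·r·κ(s)·μ(t) ≠ 0 for all s, t ∈ ℝ. Then r²·K(s,t) − 2r·H(s,t) + ε = 0 for all s, t ∈ ℝ; that is, every non-degenerate regular tubular surface in Lorentzian 3-space is a linear Weingarten surface. -/

import Mathlib

theorem stmt_18 (r : ℝ) (hr : 0 < r) (ε εB : ℝ)
    (hε : ε = -1 ∨ ε = 1) (hεB : εB = -1 ∨ εB = 1) (μ κ : ℝ → ℝ)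
    (hreg : ∀ s t : ℝ, 1 + εB * r * κ s * μ t ≠ 0) (s t : ℝ) :
    r ^ 2 * (ε * εB * κ s * μ t / (r * (1 + εB * r * κ s * μ t))) -
        2 * r * (ε * (2 * εB * r * κ s * μ t + 1) / (2 * r * (1 + εB * r * κ s * μ t))) +
      ε = 0 := by
  have h := hreg s t
  have h' : 1 + r * εB * κ s * μ t ≠ 0 := by rwa [mul_comm r εB]
  field_simp
  ring
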